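/- Let X be a Banach space, (z_n) a sequence spanning an asymptotically isometric copy of ℓ₁ with parameters (ε_n), and (u_n) a sequence with ‖u_n‖ ≤ 1 and ‖z_n − u_n‖ → 0. Then, after discarding finitely many terms, (u_n) spans an asymptotically isometric copy of ℓ₁. -/

import Mathlib

open Filter
open scoped BigOperators

theorem aic_l1_perturbation
    {X : Type*} [NormedAddCommGroup X] [NormedSpace ℝ X] [CompleteSpace X]
    (z : ℕ → X) (ε : ℕ → ℝ)
    (hε : ∀ n, ε n ∈ Set.Ioo (0 : ℝ) 1)
    (hεlim : Tendsto ε atTop (nhds 0))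
    (haic : ∀ t : ℕ → ℝ, Summable (fun n => |t n|) →
      (∑' n, (1 - ε n) * |t n|) ≤ ‖∑' n, t n • z n‖ ∧
        ‖∑' n, t n • z n‖ ≤ ∑' n, |t n|)
    (u : ℕ → X) (hu : ∀ n, ‖u n‖ ≤ 1)
    (hdiff : Tendsto (fun n => ‖z n - u n‖) atTop (nhds 0)) :
    ∃ N : ℕ, ∃ ε' : ℕ → ℝ, (∀ n, ε' n ∈ Set.Ioo (0 : ℝ) 1) ∧
      Tendsto ε' atTop (nhds 0) ∧
      ∀ t : ℕ → ℝ, Summable (fun n => |t n|) →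
        (∑' n, (1 - ε' n) * |t n|) ≤ ‖∑' n, t n • u (n + N)‖ ∧
          ‖∑' n, t n • u (n + N)‖ ≤ ∑' n, |t n| := by
  classical
  set d : ℕ → ℝ := fun n => ‖z n - u n‖ with hd
  have hd0 : ∀ n, 0 ≤ d n := fun n => norm_nonneg _
  -- bound on ‖z n‖
  have hz1 : ∀ k, ‖z k‖ ≤ 1 := by
    intro k
    set t : ℕ → ℝ := fun m => if m = k then (1 : ℝ) else 0 with htdef
    have ht : Summable (fun n => |t n|) := by
      apply summable_of_ne_finset_zero (s := {k})
      intro n hn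
      simp only [Finset.mem_singleton] at hn
      simp [htdef, hn]
    have h2 := (haic t ht).2
    have h3 : (∑' n, t n • z n) = z k := by
      rw [tsum_eq_single k]
      · simp [htdef]
      · intro n hn; simp [htdef, hn]
    have h4 : (∑' n, |t n|) = 1 := by
      rw [tsum_eq_single k]
      · simp [htdef]
      · intro n hn; simp [htdef, hn]
    rw [h3, h4] at h2
    exact h2
  -- choose N
  have hsum0 : Tendsto (fun n => ε n + d n) atTop (nhds 0) := by
    have := hεlim.add hdiff
    simpa using this
  have hev : ∀ᶠ n in atTop, ε n + d n < 1 := hsum0.eventually_lt_const one_pos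
  obtain ⟨N, hN⟩ := eventually_atTop.mp hev
  refine ⟨N, fun n => ε (n + N) + d (n + N), ?_, ?_, ?_⟩
  · intro n
    have h1 := (hε (n + N)).1
    have h2 := hd0 (n + N)
    have h3 := hN (n + N) (Nat.le_add_left N n)
    exact ⟨by dsimp only; linarith, by dsimp only; linarith⟩
  · have : Tendsto (fun n => ε (n + N) + d (n + N)) atTop (nhds (0 + 0)) :=
      ((hεlim.comp (tendsto_add_atTop_nat N)).add
        (hdiff.comp (tendsto_add_atTop_nat N)))
    simpa using this
  · intro t ht
    have hd2 : ∀ n, d n ≤ 2 := by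
      intro n
      calc d n ≤ ‖z n‖ + ‖u n‖ := norm_sub_le _ _
        _ ≤ 1 + 1 := add_le_add (hz1 n) (hu n)
        _ = 2 := by norm_num
    have hbu : ∀ n, ‖t n • u (n + N)‖ ≤ |t n| := by
      intro n
      rw [norm_smul, Real.norm_eq_abs]
      exact (mul_le_mul_of_nonneg_left (hu _) (abs_nonneg _)).trans_eq (mul_one _)
    have hbz : ∀ n, ‖t n • z (n + N)‖ ≤ |t n| := by
      intro n
      rw [norm_smul, Real.norm_eq_abs]
      exact (mul_le_mul_of_nonneg_left (hz1 _) (abs_nonneg _)).trans_eq (mul_one _)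
    have hsnu : Summable (fun n => ‖t n • u (n + N)‖) :=
      Summable.of_nonneg_of_le (fun n => norm_nonneg _) hbu ht
    have htu : Summable (fun n => t n • u (n + N)) := Summable.of_norm_bounded ht hbu
    have htz : Summable (fun n => t n • z (n + N)) := Summable.of_norm_bounded ht hbz
    constructor
    · -- lower bound
      set s : ℕ → ℝ := fun n => if N ≤ n then t (n - N) else 0 with hsdef
      have hsabs : (fun n => |s (n + N)|) = fun n => |t n| := by
        funext n; simp [hsdef]
      have hs : Summable (fun n => |s n|) := by
        rw [← summable_nat_add_iff N, hsabs]; exact ht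
      have hlow := (haic s hs).1
      have hsz : Summable (fun n => s n • z n) := by
        apply Summable.of_norm_bounded hs
        intro n
        rw [norm_smul, Real.norm_eq_abs]
        exact (mul_le_mul_of_nonneg_left (hz1 _) (abs_nonneg _)).trans_eq (mul_one _)
      have hveq : (∑' n, s n • z n) = ∑' n, t n • z (n + N) := by
        have h1 := Summable.sum_add_tsum_nat_add (f := fun n => s n • z n) N hsz
        have h2 : (∑ i ∈ Finset.range N, s i • z i) = 0 := by
          apply Finset.sum_eq_zero
          intro i hi
          have : ¬ N ≤ i := by
            simp only [Finset.mem_range] at hi; omega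
          simp [hsdef, this]
        have h3 : (fun n => s (n + N) • z (n + N)) = fun n => t n • z (n + N) := by
          funext n; simp [hsdef]
        rw [h2, zero_add, h3] at h1
        exact h1.symm
      have hse : Summable (fun n => (1 - ε n) * |s n|) := by
        apply Summable.of_nonneg_of_le (fun n => ?_) (fun n => ?_) hs
        · have := (hε n).2
          have := abs_nonneg (s n)
          nlinarith
        · have h1 := (hε n).1
          have h2 := abs_nonneg (s n)
          nlinarith
      have hseq : (∑' n, (1 - ε n) * |s n|) = ∑' n, (1 - ε (n + N)) * |t n| := by
        have h1 := Summable.sum_add_tsum_nat_add (f := fun n => (1 - ε n) * |s n|) N hse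
        have h2 : (∑ i ∈ Finset.range N, (1 - ε i) * |s i|) = 0 := by
          apply Finset.sum_eq_zero
          intro i hi
          have : ¬ N ≤ i := by
            simp only [Finset.mem_range] at hi; omega
          simp [hsdef, this]
        have h3 : (fun n => (1 - ε (n + N)) * |s (n + N)|)
            = fun n => (1 - ε (n + N)) * |t n| := by
          funext n; simp [hsdef]
        rw [h2, zero_add, h3] at h1
        exact h1.symm
      rw [hveq, hseq] at hlow
      have hdsum : Summable (fun n => d (n + N) * |t n|) := by
        apply Summable.of_nonneg_of_le
          (fun n => mul_nonneg (hd0 _) (abs_nonneg _))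
          (fun n => mul_le_mul_of_nonneg_right (hd2 _) (abs_nonneg _))
          (ht.mul_left 2)
      have hnzu : ∀ n, ‖t n • (z (n + N) - u (n + N))‖ = d (n + N) * |t n| := by
        intro n
        rw [norm_smul, Real.norm_eq_abs, mul_comm]
      have hzu : Summable (fun n => t n • (z (n + N) - u (n + N))) := by
        apply Summable.of_norm_bounded hdsum
        intro n
        exact (hnzu n).le
      have hzun : Summable (fun n => ‖t n • (z (n + N) - u (n + N))‖) := by
        apply Summable.of_nonneg_of_le (fun n => norm_nonneg _)
          (fun n => (hnzu n).le) hdsum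
      have hdiffbound : ‖∑' n, t n • (z (n + N) - u (n + N))‖
          ≤ ∑' n, d (n + N) * |t n| := by
        refine (norm_tsum_le_tsum_norm hzun).trans_eq ?_
        exact tsum_congr hnzu
      have hsplit : (∑' n, t n • z (n + N)) - (∑' n, t n • u (n + N))
          = ∑' n, t n • (z (n + N) - u (n + N)) := by
        rw [← Summable.tsum_sub htz htu]
        exact tsum_congr (fun n => (smul_sub _ _ _).symm)
      have hkey : ‖∑' n, t n • z (n + N)‖ - ‖∑' n, t n • u (n + N)‖
          ≤ ∑' n, d (n + N) * |t n| := by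
        calc ‖∑' n, t n • z (n + N)‖ - ‖∑' n, t n • u (n + N)‖
            ≤ ‖(∑' n, t n • z (n + N)) - (∑' n, t n • u (n + N))‖ :=
              norm_sub_norm_le _ _
          _ = ‖∑' n, t n • (z (n + N) - u (n + N))‖ := by rw [hsplit]
          _ ≤ ∑' n, d (n + N) * |t n| := hdiffbound
      have heps : Summable (fun n => (1 - ε (n + N)) * |t n|) := by
        apply Summable.of_nonneg_of_le (fun n => ?_) (fun n => ?_) ht
        · have := (hε (n + N)).2
          have := abs_nonneg (t n)
          nlinarith
        · have h1 := (hε (n + N)).1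
          have h2 := abs_nonneg (t n)
          nlinarith
      have hfinal : (∑' n, (1 - (ε (n + N) + d (n + N))) * |t n|)
          = (∑' n, (1 - ε (n + N)) * |t n|) - ∑' n, d (n + N) * |t n| := by
        rw [← Summable.tsum_sub heps hdsum]
        exact tsum_congr (fun n => by ring)
      show (∑' n, (1 - (ε (n + N) + d (n + N))) * |t n|) ≤ ‖∑' n, t n • u (n + N)‖
      rw [hfinal]
      linarith
    · calc ‖∑' n, t n • u (n + N)‖ ≤ ∑' n, ‖t n • u (n + N)‖ :=
            norm_tsum_le_tsum_norm hsnu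
        _ ≤ ∑' n, |t n| := Summable.tsum_le_tsum hbu hsnu ht
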